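/- For 0 < |q| < |p| ≤ 1 (ensuring convergence) and |z| sufficiently small, the (p,q)-binomial theorem for the series ₁Φ₀ holds: Σ_{n=0}^∞ (((a,b);(p,q))_n / ((p,q);(p,q))_n) z^n = ∏_{k=0}^∞ (p^{k+1} - b z q^k)/(p^{k+1} - a z q^k). -/

import Mathlib

open Finset Filter Topology

namespace PQAux

/-- normalized coefficient -/
noncomputable def t (a b Q : ℂ) (n : ℕ) : ℂ :=
  ∏ j ∈ Finset.range n, ((a - b * Q ^ j) / (1 - Q ^ (j + 1)))

noncomputable def S (a b Q w : ℂ) : ℂ := ∑' n : ℕ, t a b Q n * w ^ n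

variable {a b Q : ℂ}

lemma one_sub_pow_norm (hQ : ‖Q‖ < 1) (j : ℕ) : 1 - ‖Q‖ ≤ ‖(1 : ℂ) - Q ^ (j + 1)‖ := by
  have h1 : ‖Q ^ (j+1)‖ ≤ ‖Q‖ := by
    rw [norm_pow]
    exact pow_le_of_le_one (norm_nonneg _) hQ.le (Nat.succ_ne_zero j)
  calc 1 - ‖Q‖ ≤ 1 - ‖Q ^ (j+1)‖ := by linarith
    _ = ‖(1:ℂ)‖ - ‖Q ^ (j+1)‖ := by simp
    _ ≤ ‖(1:ℂ) - Q ^ (j+1)‖ := norm_sub_norm_le _ _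

lemma one_sub_pow_ne (hQ : ‖Q‖ < 1) (j : ℕ) : (1 : ℂ) - Q ^ (j + 1) ≠ 0 := by
  intro h
  have := one_sub_pow_norm hQ j
  rw [h, norm_zero] at this
  linarith

lemma norm_t_le (hQ : ‖Q‖ < 1) (n : ℕ) :
    ‖t a b Q n‖ ≤ ((‖a‖ + ‖b‖) / (1 - ‖Q‖)) ^ n := by
  have hQ' : (0:ℝ) < 1 - ‖Q‖ := by linarith
  have key : ∀ i : ℕ, ‖(a - b * Q ^ i) / (1 - Q ^ (i + 1))‖ ≤ (‖a‖ + ‖b‖) / (1 - ‖Q‖) := by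
    intro i
    rw [norm_div]
    refine div_le_div₀ (by positivity) ?_ hQ' (one_sub_pow_norm hQ i)
    calc ‖a - b * Q ^ i‖ ≤ ‖a‖ + ‖b * Q ^ i‖ := norm_sub_le _ _
      _ = ‖a‖ + ‖b‖ * ‖Q‖ ^ i := by rw [norm_mul, norm_pow]
      _ ≤ ‖a‖ + ‖b‖ * 1 := by
          gcongr
          exact pow_le_one₀ (norm_nonneg _) hQ.le
      _ = ‖a‖ + ‖b‖ := by ring
  rw [t]
  calc ‖∏ j ∈ range n, ((a - b * Q ^ j) / (1 - Q ^ (j + 1)))‖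
      = ∏ j ∈ range n, ‖(a - b * Q ^ j) / (1 - Q ^ (j + 1))‖ := norm_prod _ _
    _ ≤ ∏ _j ∈ range n, ((‖a‖ + ‖b‖) / (1 - ‖Q‖)) :=
        Finset.prod_le_prod (fun i _ => norm_nonneg _) (fun i _ => key i)
    _ = ((‖a‖ + ‖b‖) / (1 - ‖Q‖)) ^ n := by rw [Finset.prod_const, card_range]

lemma t_rec (hQ : ‖Q‖ < 1) (n : ℕ) :
    t a b Q (n + 1) * (1 - Q ^ (n + 1)) = t a b Q n * (a - b * Q ^ n) := by
  rw [t, Finset.prod_range_succ, ← t, mul_assoc,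
    div_mul_cancel₀ _ (one_sub_pow_ne hQ n)]


lemma norm_tw_le (hQ : ‖Q‖ < 1) {w : ℂ}
    (hw : (‖a‖ + ‖b‖) / (1 - ‖Q‖) * ‖w‖ ≤ 1/3) (n : ℕ) :
    ‖t a b Q n * w ^ n‖ ≤ (1/3 : ℝ) ^ n := by
  have hQ' : (0:ℝ) < 1 - ‖Q‖ := by linarith
  have hK : (0:ℝ) ≤ (‖a‖ + ‖b‖) / (1 - ‖Q‖) := by positivity
  calc ‖t a b Q n * w ^ n‖ = ‖t a b Q n‖ * ‖w‖ ^ n := by rw [norm_mul, norm_pow]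
    _ ≤ ((‖a‖ + ‖b‖) / (1 - ‖Q‖)) ^ n * ‖w‖ ^ n := by
        gcongr
        exact norm_t_le hQ n
    _ = ((‖a‖ + ‖b‖) / (1 - ‖Q‖) * ‖w‖) ^ n := (mul_pow _ _ _).symm
    _ ≤ (1/3 : ℝ) ^ n := by
        refine pow_le_pow_left₀ ?_ hw n
        have hQ'' : (0:ℝ) < 1 - ‖Q‖ := hQ'
        positivity

lemma summable_tw (hQ : ‖Q‖ < 1) {w : ℂ}
    (hw : (‖a‖ + ‖b‖) / (1 - ‖Q‖) * ‖w‖ ≤ 1/3) :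
    Summable (fun n => t a b Q n * w ^ n) := by
  refine Summable.of_norm_bounded (summable_geometric_of_lt_one (by norm_num) (by norm_num))
    (norm_tw_le hQ hw)

lemma S_sub_one (hQ : ‖Q‖ < 1) {w : ℂ}
    (hw : (‖a‖ + ‖b‖) / (1 - ‖Q‖) * ‖w‖ ≤ 1/3) :
    ‖S a b Q w - 1‖ ≤ (3/2) * ((‖a‖ + ‖b‖) / (1 - ‖Q‖) * ‖w‖) := by
  set r : ℝ := (‖a‖ + ‖b‖) / (1 - ‖Q‖) * ‖w‖ with hr
  have hr0 : 0 ≤ r := by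
    have hQ' : (0:ℝ) < 1 - ‖Q‖ := by linarith
    positivity
  have hsum := summable_tw hQ hw
  have h0 : t a b Q 0 * w ^ 0 = 1 := by simp [t]
  have hbd : ∀ n : ℕ, ‖t a b Q (n+1) * w ^ (n+1)‖ ≤ r ^ (n+1) := by
    intro n
    calc ‖t a b Q (n+1) * w ^ (n+1)‖ = ‖t a b Q (n+1)‖ * ‖w‖ ^ (n+1) := by
          rw [norm_mul, norm_pow]
      _ ≤ ((‖a‖ + ‖b‖) / (1 - ‖Q‖)) ^ (n+1) * ‖w‖ ^ (n+1) := by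
          gcongr; exact norm_t_le hQ _
      _ = r ^ (n+1) := by rw [hr, mul_pow]
  have hsumr : Summable (fun n : ℕ => r ^ (n+1)) := by
    refine (summable_geometric_of_lt_one hr0 (by linarith)).mul_left r |>.congr ?_
    intro n; rw [pow_succ, mul_comm]
  have hS : S a b Q w - 1 = ∑' n : ℕ, t a b Q (n+1) * w ^ (n+1) := by
    rw [S, hsum.tsum_eq_zero_add, h0]; ring
  rw [hS]
  calc ‖∑' n : ℕ, t a b Q (n+1) * w ^ (n+1)‖ ≤ ∑' n : ℕ, r ^ (n+1) := by
        refine norm_tsum_le_tsum_norm ?_ |>.trans ?_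
        · exact ((summable_nat_add_iff 1).mpr hsum).norm
        · exact Summable.tsum_le_tsum hbd ((summable_nat_add_iff 1).mpr hsum).norm hsumr
    _ = r * (1 - r)⁻¹ := by
        rw [tsum_eq_tsum_of_hasSum_iff_hasSum (fun {c} => Iff.rfl)]
        have := tsum_geometric_of_lt_one hr0 (by linarith : r < 1)
        calc (∑' n : ℕ, r ^ (n+1)) = r * ∑' n : ℕ, r ^ n := by
              rw [← tsum_mul_left]
              exact tsum_congr fun n => by rw [pow_succ, mul_comm]
          _ = r * (1 - r)⁻¹ := by rw [this]
    _ ≤ (3/2) * r := by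
        have h1 : (1 - r)⁻¹ ≤ (3/2 : ℝ) := by
          rw [inv_le_comm₀ (by linarith) (by norm_num)]
          linarith
        calc r * (1-r)⁻¹ ≤ r * (3/2) := by gcongr
          _ = (3/2) * r := by ring

lemma norm_S_ge (hQ : ‖Q‖ < 1) {w : ℂ}
    (hw : (‖a‖ + ‖b‖) / (1 - ‖Q‖) * ‖w‖ ≤ 1/3) : (1/2 : ℝ) ≤ ‖S a b Q w‖ := by
  have h := S_sub_one hQ hw
  have h2 : ‖S a b Q w - 1‖ ≤ 1/2 := by linarith
  have h4 : ‖(1:ℂ)‖ ≤ ‖S a b Q w‖ + ‖1 - S a b Q w‖ := by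
    have e : S a b Q w + (1 - S a b Q w) = 1 := by ring
    calc ‖(1:ℂ)‖ = ‖S a b Q w + (1 - S a b Q w)‖ := by rw [e]
      _ ≤ ‖S a b Q w‖ + ‖1 - S a b Q w‖ := norm_add_le _ _
  rw [norm_one, norm_sub_rev] at h4
  linarith

lemma S_ne_zero (hQ : ‖Q‖ < 1) {w : ℂ}
    (hw : (‖a‖ + ‖b‖) / (1 - ‖Q‖) * ‖w‖ ≤ 1/3) : S a b Q w ≠ 0 := by
  intro h
  have := norm_S_ge hQ hw
  rw [h, norm_zero] at this
  linarith


lemma funeq (hQ : ‖Q‖ < 1) {w : ℂ}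
    (hw : (‖a‖ + ‖b‖) / (1 - ‖Q‖) * ‖w‖ ≤ 1/3) :
    S a b Q w * (1 - a * w) = (1 - b * w) * S a b Q (Q * w) := by
  have hQ' : (0:ℝ) < 1 - ‖Q‖ := by linarith
  have hK : (0:ℝ) ≤ (‖a‖ + ‖b‖) / (1 - ‖Q‖) := by positivity
  have hw' : (‖a‖ + ‖b‖) / (1 - ‖Q‖) * ‖Q * w‖ ≤ 1/3 := by
    refine le_trans ?_ hw
    rw [norm_mul]
    nlinarith [mul_nonneg (mul_nonneg hK (norm_nonneg w)) (by linarith : (0:ℝ) ≤ 1 - ‖Q‖)]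
  set u : ℕ → ℂ := fun n => t a b Q n * w ^ n with hu
  set v : ℕ → ℂ := fun n => t a b Q n * (Q * w) ^ n with hv
  set g : ℕ → ℂ := fun n => t a b Q n * (1 - Q ^ n) * w ^ n with hg
  have hsu : Summable u := summable_tw hQ hw
  have hsv : Summable v := summable_tw hQ hw'
  have hsg : Summable g := by
    refine Summable.of_norm_bounded (g := fun n => 2 * (1/3:ℝ)^n)
      (((summable_geometric_of_lt_one (by norm_num) (by norm_num))).mul_left 2) ?_
    intro n
    have h1 : ‖(1:ℂ) - Q ^ n‖ ≤ 2 := by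
      calc ‖(1:ℂ) - Q ^ n‖ ≤ ‖(1:ℂ)‖ + ‖Q ^ n‖ := norm_sub_le _ _
        _ ≤ 1 + 1 := by
            rw [norm_one, norm_pow]
            gcongr
            · exact pow_le_one₀ (norm_nonneg _) hQ.le
        _ = 2 := by norm_num
    calc ‖g n‖ = ‖(1:ℂ) - Q ^ n‖ * ‖t a b Q n * w ^ n‖ := by
          rw [hg]
          simp only [norm_mul]
          ring
      _ ≤ 2 * (1/3:ℝ)^n := by
          refine mul_le_mul h1 (norm_tw_le hQ hw n) (norm_nonneg _) (by norm_num)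
  have hsg1 : Summable (fun n => g (n + 1)) := (summable_nat_add_iff 1).mpr hsg
  have key : ∀ n : ℕ, u n * (1 - a * w) - (1 - b * w) * v n = g n - g (n + 1) := by
    intro n
    have hrec := t_rec (a := a) (b := b) hQ n
    have hgn1 : g (n + 1) = t a b Q n * (a - b * Q ^ n) * w ^ (n + 1) := by
      rw [hg]
      simp only
      rw [show t a b Q (n+1) * (1 - Q ^ (n+1)) * w ^ (n+1)
          = (t a b Q (n+1) * (1 - Q ^ (n+1))) * w ^ (n+1) by ring, hrec]
    rw [hgn1, hu, hv, hg]
    simp only [mul_pow]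
    ring
  have step1 : S a b Q w * (1 - a * w) - (1 - b * w) * S a b Q (Q * w) = 0 := by
    have e1 : S a b Q w * (1 - a * w) = ∑' n, u n * (1 - a * w) := (tsum_mul_right).symm
    have e2 : (1 - b * w) * S a b Q (Q * w) = ∑' n, (1 - b * w) * v n := (tsum_mul_left).symm
    rw [e1, e2, ← Summable.tsum_sub (hsu.mul_right _) (hsv.mul_left _)]
    have e3 : ∑' n, (u n * (1 - a * w) - (1 - b * w) * v n) = ∑' n, (g n - g (n + 1)) :=
      tsum_congr key
    rw [e3, Summable.tsum_sub hsg hsg1]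
    have e4 : ∑' n, g n = g 0 + ∑' n, g (n + 1) := hsg.tsum_eq_zero_add
    have e5 : g 0 = 0 := by simp [hg]
    rw [e4, e5]
    ring
  exact sub_eq_zero.mp step1

lemma iterate_eq (hQ : ‖Q‖ < 1) {w : ℂ}
    (hw : (‖a‖ + ‖b‖) / (1 - ‖Q‖) * ‖w‖ ≤ 1/3) (N : ℕ) :
    S a b Q w = (∏ k ∈ Finset.range N, ((1 - b * w * Q ^ k) / (1 - a * w * Q ^ k)))
      * S a b Q (Q ^ N * w) := by
  have hQ' : (0:ℝ) < 1 - ‖Q‖ := by linarith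
  have hK : (0:ℝ) ≤ (‖a‖ + ‖b‖) / (1 - ‖Q‖) := by positivity
  have hwN : ∀ M : ℕ, (‖a‖ + ‖b‖) / (1 - ‖Q‖) * ‖Q ^ M * w‖ ≤ 1/3 := by
    intro M
    refine le_trans ?_ hw
    rw [norm_mul, norm_pow]
    have h1 : ‖Q‖ ^ M ≤ 1 := pow_le_one₀ (norm_nonneg _) hQ.le
    nlinarith [mul_nonneg (mul_nonneg hK (norm_nonneg w)) (by linarith : (0:ℝ) ≤ 1 - ‖Q‖ ^ M)]
  have hane : ∀ M : ℕ, (1 : ℂ) - a * (Q ^ M * w) ≠ 0 := by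
    intro M h
    have h1 : ‖a * (Q ^ M * w)‖ ≤ 1/3 := by
      calc ‖a * (Q ^ M * w)‖ = ‖a‖ * ‖Q ^ M * w‖ := norm_mul _ _
        _ ≤ ((‖a‖ + ‖b‖) / (1 - ‖Q‖)) * ‖Q ^ M * w‖ := by
            refine mul_le_mul_of_nonneg_right ?_ (norm_nonneg _)
            rw [le_div_iff₀ hQ']
            nlinarith [norm_nonneg a, norm_nonneg b, norm_nonneg Q]
        _ ≤ 1/3 := hwN M
    have h2 : a * (Q ^ M * w) = 1 := by linear_combination -h
    rw [h2, norm_one] at h1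
    linarith
  induction N with
  | zero => simp
  | succ N ih =>
    have hfe := funeq hQ (hwN N)
    have harg : Q * (Q ^ N * w) = Q ^ (N + 1) * w := by ring
    rw [harg] at hfe
    have hSN : S a b Q (Q ^ N * w)
        = ((1 - b * (Q ^ N * w)) / (1 - a * (Q ^ N * w))) * S a b Q (Q ^ (N + 1) * w) := by
      rw [div_mul_eq_mul_div, eq_comm, div_eq_iff (hane N)]
      linear_combination -hfe
    rw [ih, hSN, Finset.prod_range_succ]
    have e : (1 - b * (Q ^ N * w)) = 1 - b * w * Q ^ N := by ring
    have e2 : (1 - a * (Q ^ N * w)) = 1 - a * w * Q ^ N := by ring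
    rw [e, e2]
    ring


lemma norm_one_sub_ge {x : ℂ} (h : ‖x‖ ≤ 1/3) : 2/3 ≤ ‖1 - x‖ := by
  have h1 : ‖(1:ℂ)‖ - ‖x‖ ≤ ‖1 - x‖ := norm_sub_norm_le _ _
  rw [norm_one] at h1
  linarith

lemma one_sub_ne' {x : ℂ} (h : ‖x‖ ≤ 1/3) : (1:ℂ) - x ≠ 0 := by
  intro h0
  have := norm_one_sub_ge h
  rw [h0, norm_zero] at this
  linarith

lemma core (hQ : ‖Q‖ < 1) {w : ℂ}
    (hw : (‖a‖ + ‖b‖) / (1 - ‖Q‖) * ‖w‖ ≤ 1/3) :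
    S a b Q w = ∏' k : ℕ, ((1 - b * w * Q ^ k) / (1 - a * w * Q ^ k)) := by
  have hQ' : (0:ℝ) < 1 - ‖Q‖ := by linarith
  have hK : (0:ℝ) ≤ (‖a‖ + ‖b‖) / (1 - ‖Q‖) := by positivity
  set f : ℕ → ℂ := fun k => (1 - b * w * Q ^ k) / (1 - a * w * Q ^ k) with hf
  have habw : (‖a‖ + ‖b‖) * ‖w‖ ≤ 1/3 := by
    have : (‖a‖ + ‖b‖) * ‖w‖ ≤ (‖a‖ + ‖b‖) / (1 - ‖Q‖) * ‖w‖ := by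
      refine mul_le_mul_of_nonneg_right ?_ (norm_nonneg _)
      rw [le_div_iff₀ hQ']
      nlinarith [mul_nonneg (add_nonneg (norm_nonneg a) (norm_nonneg b)) (norm_nonneg Q)]
    linarith
  have hQk1 : ∀ k : ℕ, ‖Q‖ ^ k ≤ 1 := fun k => pow_le_one₀ (norm_nonneg _) hQ.le
  have hca : ∀ k : ℕ, ‖a * w * Q ^ k‖ ≤ 1/3 := by
    intro k
    rw [norm_mul, norm_mul, norm_pow]
    nlinarith [norm_nonneg a, norm_nonneg b, norm_nonneg w, hQk1 k,
      pow_nonneg (norm_nonneg Q) k,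
      mul_nonneg (mul_nonneg (norm_nonneg a) (norm_nonneg w))
        (sub_nonneg.mpr (hQk1 k)),
      mul_nonneg (mul_nonneg (norm_nonneg b) (norm_nonneg w))
        (pow_nonneg (norm_nonneg Q) k)]
  have hcb : ∀ k : ℕ, ‖b * w * Q ^ k‖ ≤ 1/3 := by
    intro k
    rw [norm_mul, norm_mul, norm_pow]
    nlinarith [norm_nonneg a, norm_nonneg b, norm_nonneg w, hQk1 k,
      pow_nonneg (norm_nonneg Q) k,
      mul_nonneg (mul_nonneg (norm_nonneg b) (norm_nonneg w))
        (sub_nonneg.mpr (hQk1 k)),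
      mul_nonneg (mul_nonneg (norm_nonneg a) (norm_nonneg w))
        (pow_nonneg (norm_nonneg Q) k)]
  have hfne : ∀ k : ℕ, f k ≠ 0 := fun k =>
    div_ne_zero (one_sub_ne' (hcb k)) (one_sub_ne' (hca k))
  have hfsub : ∀ k : ℕ, ‖f k - 1‖ ≤ (3/2) * ((‖a‖ + ‖b‖) * ‖w‖) * ‖Q‖ ^ k := by
    intro k
    have e : f k - 1 = ((a - b) * w * Q ^ k) / (1 - a * w * Q ^ k) := by
      rw [hf]
      rw [div_sub_one (one_sub_ne' (hca k))]
      ring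
    rw [e, norm_div]
    have hnum : ‖(a - b) * w * Q ^ k‖ ≤ (‖a‖ + ‖b‖) * ‖w‖ * ‖Q‖ ^ k := by
      rw [norm_mul, norm_mul, norm_pow]
      have : ‖a - b‖ ≤ ‖a‖ + ‖b‖ := norm_sub_le _ _
      gcongr
    have hden := norm_one_sub_ge (hca k)
    calc ‖(a - b) * w * Q ^ k‖ / ‖1 - a * w * Q ^ k‖
        ≤ ((‖a‖ + ‖b‖) * ‖w‖ * ‖Q‖ ^ k) / (2/3) := by
          refine div_le_div₀ (by positivity) hnum (by norm_num) hden
      _ = (3/2) * ((‖a‖ + ‖b‖) * ‖w‖) * ‖Q‖ ^ k := by ring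
  have hfsub12 : ∀ k : ℕ, ‖f k - 1‖ ≤ 1/2 := by
    intro k
    refine (hfsub k).trans ?_
    nlinarith [pow_nonneg (norm_nonneg Q) k, hQk1 k,
      mul_nonneg (add_nonneg (norm_nonneg a) (norm_nonneg b)) (norm_nonneg w)]
  have hlog : Summable (fun k => Complex.log (f k)) := by
    refine Summable.of_norm_bounded (g := fun k => (3/2) * ((3/2) * ((‖a‖ + ‖b‖) * ‖w‖)) * ‖Q‖ ^ k) ?_ ?_
    · exact ((summable_geometric_of_lt_one (norm_nonneg Q) hQ).mul_left _)
    · intro k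
      have e : (1 : ℂ) + (f k - 1) = f k := by ring
      have := Complex.norm_log_one_add_half_le_self (z := f k - 1) (by
        simpa using hfsub12 k)
      rw [e] at this
      refine this.trans ?_
      have := hfsub k
      nlinarith [norm_nonneg (f k - 1)]
  have hmul : Multipliable f := by
    have := Complex.multipliable_of_summable_log hlog
    exact this
  have hwN : ∀ M : ℕ, (‖a‖ + ‖b‖) / (1 - ‖Q‖) * ‖Q ^ M * w‖ ≤ 1/3 := by
    intro M
    refine le_trans ?_ hw
    rw [norm_mul, norm_pow]
    nlinarith [mul_nonneg (mul_nonneg hK (norm_nonneg w))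
      (by linarith [hQk1 M] : (0:ℝ) ≤ 1 - ‖Q‖ ^ M)]
  have hprod : ∀ N : ℕ, ∏ k ∈ Finset.range N, f k = S a b Q w / S a b Q (Q ^ N * w) := by
    intro N
    rw [eq_div_iff (S_ne_zero hQ (hwN N))]
    exact (iterate_eq hQ hw N).symm
  have hlim1 : Tendsto (fun N : ℕ => S a b Q (Q ^ N * w)) atTop (𝓝 1) := by
    rw [tendsto_iff_norm_sub_tendsto_zero]
    refine squeeze_zero (g := fun N : ℕ =>
        (3/2) * ((‖a‖ + ‖b‖) / (1 - ‖Q‖) * ‖w‖) * ‖Q‖ ^ N) (fun N => norm_nonneg _)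
      (fun N => ?_) ?_
    · exact (S_sub_one hQ (hwN N)).trans (le_of_eq (by
        rw [norm_mul, norm_pow]; ring))
    · have := (tendsto_pow_atTop_nhds_zero_of_lt_one (norm_nonneg Q) hQ).const_mul
        ((3/2) * ((‖a‖ + ‖b‖) / (1 - ‖Q‖) * ‖w‖))
      simpa [mul_comm] using this
  have hlim2 : Tendsto (fun N : ℕ => ∏ k ∈ Finset.range N, f k) atTop (𝓝 (S a b Q w)) := by
    have h1 : Tendsto (fun N : ℕ => S a b Q w / S a b Q (Q ^ N * w)) atTop
        (𝓝 (S a b Q w / 1)) := tendsto_const_nhds.div hlim1 one_ne_zero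
    rw [div_one] at h1
    exact h1.congr (fun N => (hprod N).symm)
  exact tendsto_nhds_unique hlim2 hmul.hasProd.tendsto_prod_nat

end PQAux


/-- The `(p,q)`-shifted factorial `((a,b);(p,q))ₙ = ∏_{j=0}^{n-1} (a pʲ - b qʲ)`. -/
def pqPoch (a b p q : ℂ) (n : ℕ) : ℂ := ∏ j ∈ Finset.range n, (a * p ^ j - b * q ^ j)

theorem pq_binomial_series (a b p q : ℂ)
    (hq : 0 < ‖q‖) (hqp : ‖q‖ < ‖p‖) (hp : ‖p‖ ≤ 1) :
    ∃ ε > 0, ∀ z : ℂ, ‖z‖ < ε →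
      ∑' n : ℕ, pqPoch a b p q n / pqPoch p q p q n * z ^ n =
        ∏' k : ℕ, (p ^ (k + 1) - b * z * q ^ k) / (p ^ (k + 1) - a * z * q ^ k) := by
  have hpn : (0:ℝ) < ‖p‖ := lt_trans hq hqp
  have hp0 : p ≠ 0 := by
    intro h
    rw [h, norm_zero] at hpn
    exact lt_irrefl _ hpn
  set Q : ℂ := q / p with hQdef
  have hQ : ‖Q‖ < 1 := by
    rw [hQdef, norm_div]
    exact (div_lt_one hpn).mpr hqp
  have hQ' : (0:ℝ) < 1 - ‖Q‖ := by linarith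
  set K : ℝ := (‖a‖ + ‖b‖) / (1 - ‖Q‖) with hKdef
  have hK0 : (0:ℝ) ≤ K := by positivity
  refine ⟨‖p‖ / (3 * K + 3), by positivity, ?_⟩
  intro z hz
  set w : ℂ := z / p with hwdef
  have hnw : ‖w‖ = ‖z‖ / ‖p‖ := by rw [hwdef, norm_div]
  have hw : K * ‖w‖ ≤ 1 / 3 := by
    have h1 : ‖w‖ ≤ 1 / (3 * K + 3) := by
      rw [hnw, div_le_div_iff₀ hpn (by positivity)]
      calc ‖z‖ * (3 * K + 3) ≤ (‖p‖ / (3 * K + 3)) * (3 * K + 3) := by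
            refine mul_le_mul_of_nonneg_right hz.le (by positivity)
        _ = ‖p‖ := by field_simp
        _ = 1 * ‖p‖ := (one_mul _).symm
    have h2 : K * ‖w‖ ≤ K * (1 / (3 * K + 3)) :=
      mul_le_mul_of_nonneg_left h1 hK0
    have h3 : K * (1 / (3 * K + 3)) ≤ 1 / 3 := by
      rw [mul_one_div, div_le_div_iff₀ (by positivity) (by norm_num)]
      linarith
    linarith
  have hYne : ∀ j : ℕ, p * p ^ j - q * q ^ j ≠ 0 := by
    intro j h
    have h1 : ‖p * p ^ j‖ = ‖q * q ^ j‖ := by rw [sub_eq_zero.mp h]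
    rw [norm_mul, norm_mul, norm_pow, norm_pow, ← pow_succ', ← pow_succ'] at h1
    have h2 : ‖q‖ ^ (j + 1) < ‖p‖ ^ (j + 1) :=
      pow_lt_pow_left₀ hqp (norm_nonneg q) (Nat.succ_ne_zero j)
    rw [h1] at h2
    exact lt_irrefl _ h2
  have hL : ∀ n : ℕ, pqPoch a b p q n / pqPoch p q p q n * z ^ n
      = PQAux.t a b Q n * w ^ n := by
    intro n
    have e1 : pqPoch a b p q n / pqPoch p q p q n * z ^ n
        = ∏ j ∈ Finset.range n, ((a * p ^ j - b * q ^ j) / (p * p ^ j - q * q ^ j) * z) := by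
      rw [Finset.prod_mul_distrib, Finset.prod_div_distrib, Finset.prod_const,
        Finset.card_range, pqPoch, pqPoch]
    have e2 : PQAux.t a b Q n * w ^ n
        = ∏ j ∈ Finset.range n, ((a - b * Q ^ j) / (1 - Q ^ (j + 1)) * w) := by
      rw [PQAux.t, Finset.prod_mul_distrib, Finset.prod_const, Finset.card_range]
    rw [e1, e2]
    refine Finset.prod_congr rfl ?_
    intro j _
    have hBne : (1:ℂ) - Q ^ (j + 1) ≠ 0 := PQAux.one_sub_pow_ne hQ j
    rw [div_mul_eq_mul_div, div_mul_eq_mul_div, div_eq_div_iff (hYne j) hBne]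
    rw [hQdef, hwdef]
    simp only [div_pow]
    field_simp
    ring
  have hR : ∀ k : ℕ, (p ^ (k + 1) - b * z * q ^ k) / (p ^ (k + 1) - a * z * q ^ k)
      = (1 - b * w * Q ^ k) / (1 - a * w * Q ^ k) := by
    intro k
    have e1 : p ^ (k + 1) - b * z * q ^ k = p ^ (k + 1) * (1 - b * w * Q ^ k) := by
      rw [hwdef, hQdef]
      simp only [div_pow]
      field_simp
      ring
    have e2 : p ^ (k + 1) - a * z * q ^ k = p ^ (k + 1) * (1 - a * w * Q ^ k) := by
      rw [hwdef, hQdef]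
      simp only [div_pow]
      field_simp
      ring
    rw [e1, e2, mul_div_mul_left _ _ (pow_ne_zero _ hp0)]
  calc ∑' n : ℕ, pqPoch a b p q n / pqPoch p q p q n * z ^ n
      = ∑' n : ℕ, PQAux.t a b Q n * w ^ n := tsum_congr hL
    _ = ∏' k : ℕ, ((1 - b * w * Q ^ k) / (1 - a * w * Q ^ k)) := PQAux.core hQ hw
    _ = ∏' k : ℕ, (p ^ (k + 1) - b * z * q ^ k) / (p ^ (k + 1) - a * z * q ^ k) :=
        tprod_congr (fun k => (hR k).symm)
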